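/- Let W₁,…,Wₙ be square d×d matrices with unbalancedness magnitude zero, i.e. Wⱼ₊₁ᵀWⱼ₊₁ = WⱼWⱼᵀ for all j = 1,…,n−1. Then there exist orthogonal matrices U₁,…,Uₙ, V₁ and a diagonal matrix S with nonnegative entries such that Wⱼ = Uⱼ S Uⱼ₋₁ᵀ for j = 2,…,n and W₁ = U₁ S V₁ᵀ; consequently Wₙ Wₙ₋₁ ⋯ W₁ = Uₙ Sⁿ V₁ᵀ. -/

import Mathlib

open Matrix

/-- Product `W (m-1) * ⋯ * W j` of a chain of matrices with dimensions given by `d`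
(the identity when `m = j`, junk when `m < j`). -/
noncomputable def chain (d : ℕ → ℕ) (W : ∀ k : ℕ, Matrix (Fin (d (k + 1))) (Fin (d k)) ℝ)
    (j : ℕ) : (m : ℕ) → Matrix (Fin (d m)) (Fin (d j)) ℝ
  | 0 => if h : j = 0 then by subst h; exact 1 else 0
  | m + 1 => if h : j = m + 1 then by subst h; exact 1 else W m * chain d W j m

open scoped RealInnerProductSpace in
lemma exists_orthogonal_factor {d : ℕ} (A S : Matrix (Fin d) (Fin d) ℝ)
    (hS : S.IsDiag) (h : Aᵀ * A = S * S) :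
    ∃ U : Matrix (Fin d) (Fin d) ℝ, Uᵀ * U = 1 ∧ A = U * S := by
  classical
  have hSd : S = diagonal (fun i => S i i) := hS.diagonal_diag.symm
  have hSS : ∀ i i', (S * S) i i' = if i = i' then S i i * S i i else 0 := by
    intro i i'
    conv_lhs => rw [hSd]
    by_cases hii : i = i' <;> simp [diagonal_mul_diagonal, diagonal_apply, hii]
  have hAA : ∀ i i', (∑ j, A j i * A j i') = if i = i' then S i i * S i i else 0 := by
    intro i i'
    rw [← hSS i i', ← h, mul_apply]
    simp [transpose_apply]
  set v : Fin d → EuclideanSpace ℝ (Fin d) :=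
    fun i => (S i i)⁻¹ • (WithLp.toLp 2 (fun j => A j i) : EuclideanSpace ℝ (Fin d)) with hv
  have hvinner : ∀ i i', (inner ℝ (v i) (v i') : ℝ) =
      (S i i)⁻¹ * ((S i' i')⁻¹ * (if i = i' then S i i * S i i else 0)) := by
    intro i i'
    have hww : (inner ℝ (v i) (v i') : ℝ)
        = ∑ j, ((S i i)⁻¹ * A j i) * ((S i' i')⁻¹ * A j i') := by
      simp [hv, PiLp.inner_apply, RCLike.inner_apply, PiLp.smul_apply, smul_eq_mul, PiLp.toLp_apply]
      exact Finset.sum_congr rfl fun _ _ => mul_comm _ _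
    rw [hww, ← hAA i i', Finset.mul_sum, Finset.mul_sum]
    exact Finset.sum_congr rfl fun j _ => by ring
  have horth : Orthonormal ℝ ({i | S i i ≠ 0}.restrict v) := by
    rw [orthonormal_iff_ite]
    rintro ⟨i, hi⟩ ⟨i', hi'⟩
    change inner ℝ (v i) (v i') = _
    rw [hvinner i i']
    by_cases hii : i = i'
    · subst hii
      have hi0 : S i i ≠ 0 := hi
      rw [if_pos rfl, if_pos rfl]
      field_simp
    · have : (⟨i, hi⟩ : {i | S i i ≠ 0}) ≠ ⟨i', hi'⟩ := by simpa using hii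
      simp [hii, this]
  obtain ⟨b, hb⟩ := horth.exists_orthonormalBasis_extension_of_card_eq
    (by simp)
  refine ⟨Matrix.of fun j i => b i j, ?_, ?_⟩
  · ext i i'
    have := b.orthonormal
    rw [orthonormal_iff_ite] at this
    have h2 := this i i'
    rw [PiLp.inner_apply] at h2
    simp only [RCLike.inner_apply, starRingEnd_apply, star_trivial] at h2
    simp only [mul_apply, transpose_apply, Matrix.of_apply, one_apply]
    rw [← h2]
    exact Finset.sum_congr rfl fun _ _ => mul_comm _ _
  · ext j i
    rw [mul_apply]
    have : ∀ k, (Matrix.of fun j i => b i j) j k * S k i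
        = if k = i then b i j * S i i else 0 := by
      intro k
      by_cases hk : k = i
      · subst hk; simp
      · simp [hS hk, hk]
    rw [Finset.sum_congr rfl fun k _ => this k, Finset.sum_ite_eq']
    simp only [Finset.mem_univ, if_pos]
    by_cases hSi : S i i = 0
    · have hz : ∑ j, A j i * A j i = 0 := by rw [hAA i i]; simp [hSi]
      have : A j i * A j i = 0 := by
        have hnn : ∀ j ∈ Finset.univ, (0:ℝ) ≤ A j i * A j i := fun j _ => mul_self_nonneg _
        exact (Finset.sum_eq_zero_iff_of_nonneg hnn).1 hz j (Finset.mem_univ j)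
      have : A j i = 0 := by nlinarith [this]
      simp [this, hSi]
    · have hbv : b i = v i := hb i hSi
      rw [hbv, hv]
      show A j i = (S i i)⁻¹ * A j i * S i i
      field_simp

private lemma mulT_of_factor {d : ℕ} {Wm X Y S : Matrix (Fin d) (Fin d) ℝ}
    (hY : Yᵀ * Y = 1) (hSs : Sᵀ = S) (hW : Wm = X * S * Yᵀ) :
    Wm * Wmᵀ = X * (S * S) * Xᵀ := by
  subst hW
  calc (X * S * Yᵀ) * (X * S * Yᵀ)ᵀ
      = X * S * (Yᵀ * Y) * (S * Xᵀ) := by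
        rw [transpose_mul, transpose_mul, transpose_transpose, hSs]; noncomm_ring
    _ = X * (S * S) * Xᵀ := by rw [hY]; noncomm_ring

open scoped Classical in
/-- Auxiliary recursively-chosen sequence of orthogonal factors. -/
noncomputable def Useq {d : ℕ} (W : ℕ → Matrix (Fin d) (Fin d) ℝ)
    (S U0 : Matrix (Fin d) (Fin d) ℝ) : ℕ → Matrix (Fin d) (Fin d) ℝ
  | 0 => U0
  | j + 1 =>
      if hex : ∃ U', U'ᵀ * U' = 1 ∧ W (j + 1) * Useq W S U0 j = U' * S then hex.choose else 1

@[simp] lemma Useq_zero {d : ℕ} (W : ℕ → Matrix (Fin d) (Fin d) ℝ)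
    (S U0 : Matrix (Fin d) (Fin d) ℝ) : Useq W S U0 0 = U0 := rfl

open scoped Classical in
lemma Useq_succ {d : ℕ} (W : ℕ → Matrix (Fin d) (Fin d) ℝ)
    (S U0 : Matrix (Fin d) (Fin d) ℝ) (j : ℕ) :
    Useq W S U0 (j + 1) =
      if hex : ∃ U', U'ᵀ * U' = 1 ∧ W (j + 1) * Useq W S U0 j = U' * S then hex.choose
      else 1 := rfl

theorem balanced_joint_svd {d n : ℕ} (hn : 1 ≤ n)
    (W : ℕ → Matrix (Fin d) (Fin d) ℝ)
    (hbal : ∀ j : ℕ, j + 1 < n → (W (j + 1))ᵀ * W (j + 1) = W j * (W j)ᵀ) :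
    ∃ (U : ℕ → Matrix (Fin d) (Fin d) ℝ) (V₁ S : Matrix (Fin d) (Fin d) ℝ),
      (∀ j < n, (U j)ᵀ * U j = 1) ∧ V₁ᵀ * V₁ = 1 ∧
      S.IsDiag ∧ (∀ i, 0 ≤ S i i) ∧
      W 0 = U 0 * S * V₁ᵀ ∧
      (∀ j : ℕ, j + 1 < n → W (j + 1) = U (j + 1) * S * (U j)ᵀ) ∧
      chain (fun _ => d) W 0 n = U (n - 1) * S ^ n * V₁ᵀ := by
  classical
  have hG : ((W 0)ᵀ * W 0).PosSemidef := by
    have := Matrix.posSemidef_conjTranspose_mul_self (W 0)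
    rwa [conjTranspose_eq_transpose_of_trivial] at this
  have hH : ((W 0)ᵀ * W 0).IsHermitian := hG.1
  set V₁ : Matrix (Fin d) (Fin d) ℝ := (hH.eigenvectorUnitary : Matrix (Fin d) (Fin d) ℝ)
    with hV₁
  set S : Matrix (Fin d) (Fin d) ℝ := diagonal (fun i => Real.sqrt (hH.eigenvalues i)) with hSdef
  have hSdiag : S.IsDiag := by rw [hSdef]; exact isDiag_diagonal _
  have hSnn : ∀ i, 0 ≤ S i i := fun i => by
    rw [hSdef]; simp [diagonal_apply, Real.sqrt_nonneg]
  have hSsymm : Sᵀ = S := by rw [hSdef, diagonal_transpose]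
  have hSS : S * S = diagonal (fun i => hH.eigenvalues i) := by
    rw [hSdef, diagonal_mul_diagonal]
    exact congrArg diagonal (funext fun i => Real.mul_self_sqrt (hG.eigenvalues_nonneg i))
  have hV₁o : V₁ᵀ * V₁ = 1 := by
    have h1 := Matrix.mem_unitaryGroup_iff'.mp hH.eigenvectorUnitary.2
    rwa [Matrix.star_eq_conjTranspose, conjTranspose_eq_transpose_of_trivial] at h1
  have hspec : (W 0)ᵀ * W 0 = V₁ * (S * S) * V₁ᵀ := by
    have h1 := hH.spectral_theorem
    rw [Unitary.conjStarAlgAut_apply] at h1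
    rw [Matrix.star_eq_conjTranspose, conjTranspose_eq_transpose_of_trivial] at h1
    rw [hSS]
    rw [show (RCLike.ofReal ∘ hH.eigenvalues : Fin d → ℝ) = hH.eigenvalues by
      rw [RCLike.ofReal_real_eq_id]; rfl] at h1
    exact h1
  have hA0 : (W 0 * V₁)ᵀ * (W 0 * V₁) = S * S := by
    calc (W 0 * V₁)ᵀ * (W 0 * V₁)
        = V₁ᵀ * ((W 0)ᵀ * W 0) * V₁ := by rw [transpose_mul]; noncomm_ring
      _ = V₁ᵀ * (V₁ * (S * S) * V₁ᵀ) * V₁ := by rw [hspec]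
      _ = (V₁ᵀ * V₁) * (S * S) * (V₁ᵀ * V₁) := by noncomm_ring
      _ = S * S := by rw [hV₁o, one_mul, mul_one]
  obtain ⟨U0, hU0o, hU0⟩ := exists_orthogonal_factor (W 0 * V₁) S hSdiag hA0
  have hW0 : W 0 = U0 * S * V₁ᵀ := by
    have hV₁o' : V₁ * V₁ᵀ = 1 := mul_eq_one_comm.mp hV₁o
    calc W 0 = W 0 * (V₁ * V₁ᵀ) := by rw [hV₁o', mul_one]
      _ = (W 0 * V₁) * V₁ᵀ := by rw [mul_assoc]
      _ = U0 * S * V₁ᵀ := by rw [hU0]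
  have key : ∀ j, j < n → (Useq W S U0 j)ᵀ * Useq W S U0 j = 1 ∧
      W j * (W j)ᵀ = Useq W S U0 j * (S * S) * (Useq W S U0 j)ᵀ ∧
      ∀ k, j = k + 1 → W j = Useq W S U0 j * S * (Useq W S U0 k)ᵀ := by
    intro j
    induction j with
    | zero =>
      intro _
      refine ⟨by rw [Useq_zero]; exact hU0o, ?_, fun k hk => absurd hk (by omega)⟩
      rw [Useq_zero]
      exact mulT_of_factor hV₁o hSsymm hW0
    | succ j ih =>
      intro hj1
      have hj : j < n := by omega
      obtain ⟨horthj, hballj, _⟩ := ih hj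
      have hA : (W (j+1) * Useq W S U0 j)ᵀ * (W (j+1) * Useq W S U0 j) = S * S := by
        calc (W (j+1) * Useq W S U0 j)ᵀ * (W (j+1) * Useq W S U0 j)
            = (Useq W S U0 j)ᵀ * ((W (j+1))ᵀ * W (j+1)) * Useq W S U0 j := by
              rw [transpose_mul]; noncomm_ring
          _ = (Useq W S U0 j)ᵀ * (W j * (W j)ᵀ) * Useq W S U0 j := by rw [hbal j hj1]
          _ = ((Useq W S U0 j)ᵀ * Useq W S U0 j) * (S * S)
                * ((Useq W S U0 j)ᵀ * Useq W S U0 j) := by rw [hballj]; noncomm_ring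
          _ = S * S := by rw [horthj, one_mul, mul_one]
      have hex : ∃ U', U'ᵀ * U' = 1 ∧ W (j+1) * Useq W S U0 j = U' * S :=
        exists_orthogonal_factor _ S hSdiag hA
      have hUdef : Useq W S U0 (j+1) = hex.choose := by rw [Useq_succ, dif_pos hex]
      obtain ⟨ho, heq⟩ := hex.choose_spec
      have hWj1 : W (j+1) = Useq W S U0 (j+1) * S * (Useq W S U0 j)ᵀ := by
        have hUU : Useq W S U0 j * (Useq W S U0 j)ᵀ = 1 := mul_eq_one_comm.mp horthj
        calc W (j+1) = W (j+1) * (Useq W S U0 j * (Useq W S U0 j)ᵀ) := by rw [hUU, mul_one]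
          _ = (W (j+1) * Useq W S U0 j) * (Useq W S U0 j)ᵀ := by rw [mul_assoc]
          _ = Useq W S U0 (j+1) * S * (Useq W S U0 j)ᵀ := by rw [heq, hUdef]
      refine ⟨by rw [hUdef]; exact ho, ?_, ?_⟩
      · exact mulT_of_factor horthj hSsymm hWj1
      · intro k hk
        have hkj : k = j := by omega
        subst hkj
        exact hWj1
  have hchain : ∀ m, 1 ≤ m → m ≤ n →
      chain (fun _ => d) W 0 m = Useq W S U0 (m-1) * S ^ m * V₁ᵀ := by
    intro m hm
    induction m, hm using Nat.le_induction with
    | base =>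
      intro _
      have h1 : chain (fun _ => d) W 0 1 = W 0 * chain (fun _ => d) W 0 0 := rfl
      have h0 : chain (fun _ => d) W 0 0 = 1 := rfl
      rw [h1, h0, mul_one, hW0, pow_one]
      norm_num
    | succ m hm ih =>
      intro hle
      have hmn : m < n := by omega
      have hcm := ih (by omega)
      have hWm : W m = Useq W S U0 m * S * (Useq W S U0 (m-1))ᵀ := by
        have := (key m hmn).2.2 (m-1) (by omega)
        exact this
      have horth : (Useq W S U0 (m-1))ᵀ * Useq W S U0 (m-1) = 1 := (key (m-1) (by omega)).1
      have hch : chain (fun _ => d) W 0 (m+1) = W m * chain (fun _ => d) W 0 m := rfl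
      have hm1 : (m+1) - 1 = m := rfl
      rw [hch, hcm, hWm, hm1]
      calc (Useq W S U0 m * S * (Useq W S U0 (m-1))ᵀ) * (Useq W S U0 (m-1) * S ^ m * V₁ᵀ)
          = Useq W S U0 m * S * ((Useq W S U0 (m-1))ᵀ * Useq W S U0 (m-1)) * (S ^ m * V₁ᵀ) := by
            noncomm_ring
        _ = Useq W S U0 m * (S * S ^ m) * V₁ᵀ := by rw [horth]; noncomm_ring
        _ = Useq W S U0 m * S ^ (m+1) * V₁ᵀ := by rw [← pow_succ']
  refine ⟨Useq W S U0, V₁, S, fun j hj => (key j hj).1, hV₁o, hSdiag, hSnn,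
    by rw [Useq_zero]; exact hW0,
    fun j hj => (key (j+1) hj).2.2 j rfl, hchain n hn le_rfl⟩
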